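/- Let μ be a full non-atomic Borel measure on a locally compact Cantor set X with μ(𝔐_μ) = 0. If every compact open subset of X of finite μ-measure is good for μ, then μ is good (every compact open subset is good). -/

import Mathlib

open MeasureTheory Topology ENNReal TopologicalSpace

/-- A set is compact open. -/
def IsCompactOpen {X : Type*} [TopologicalSpace X] (U : Set X) : Prop :=
  IsCompact U ∧ IsOpen U

/-- The defective set of a measure: points all of whose compact open
neighbourhoods have infinite measure. -/
def DefectiveSet {X : Type*} [TopologicalSpace X] [MeasurableSpace X]
    (μ : Measure X) : Set X :=
  {x | ∀ U : Set X, IsCompactOpen U → x ∈ U → μ U = ⊤}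

/-- A compact open set `V` is good for `μ`. -/
def GoodSet {X : Type*} [TopologicalSpace X] [MeasurableSpace X]
    (μ : Measure X) (V : Set X) : Prop :=
  ∀ U : Set X, IsCompactOpen U → μ U < μ V →
    ∃ W : Set X, W ⊆ V ∧ IsCompactOpen W ∧ μ W = μ U

/-- The measure `μ` is good: every compact open set is good for `μ`. -/
def Good {X : Type*} [TopologicalSpace X] [MeasurableSpace X]
    (μ : Measure X) : Prop :=
  ∀ V : Set X, IsCompactOpen V → GoodSet μ V

/-- The restriction of `μ` to the (open) subset `A` is good: compact open
subsets of the subspace `A` are exactly compact open subsets of `X` contained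
in `A`. -/
def GoodOn {X : Type*} [TopologicalSpace X] [MeasurableSpace X]
    (μ : Measure X) (A : Set X) : Prop :=
  ∀ U V : Set X, IsCompactOpen U → U ⊆ A → IsCompactOpen V → V ⊆ A → μ U < μ V →
    ∃ W : Set X, W ⊆ V ∧ IsCompactOpen W ∧ μ W = μ U

/-- The compact open values set, as a set of extended nonnegative reals. -/
def SE {X : Type*} [TopologicalSpace X] [MeasurableSpace X]
    (μ : Measure X) : Set ℝ≥0∞ :=
  {v | v ≠ ⊤ ∧ ∃ U : Set X, IsCompactOpen U ∧ μ U = v}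

/-- The compact open values set of the restriction of `μ` to `A`. -/
def SEOn {X : Type*} [TopologicalSpace X] [MeasurableSpace X]
    (μ : Measure X) (A : Set X) : Set ℝ≥0∞ :=
  {v | v ≠ ⊤ ∧ ∃ U : Set X, IsCompactOpen U ∧ U ⊆ A ∧ μ U = v}

/-- The compact open values set, as a set of reals. -/
def Sreal {X : Type*} [TopologicalSpace X] [MeasurableSpace X]
    (μ : Measure X) : Set ℝ :=
  {r | ∃ U : Set X, IsCompactOpen U ∧ μ U ≠ ⊤ ∧ (μ U).toReal = r}

/-- The compact open values set of the restriction of `μ` to `A`, as reals. -/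
def SrealOn {X : Type*} [TopologicalSpace X] [MeasurableSpace X]
    (μ : Measure X) (A : Set X) : Set ℝ :=
  {r | ∃ U : Set X, IsCompactOpen U ∧ U ⊆ A ∧ μ U ≠ ⊤ ∧ (μ U).toReal = r}

/-- A measure is full if every non-empty open set has positive measure. -/
def IsFull {X : Type*} [TopologicalSpace X] [MeasurableSpace X]
    (μ : Measure X) : Prop :=
  ∀ U : Set X, IsOpen U → U.Nonempty → 0 < μ U

/-- A measure is non-atomic if every singleton has measure zero. -/
def NonAtomic {X : Type*} [MeasurableSpace X] (μ : Measure X) : Prop :=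
  ∀ x : X, μ {x} = 0

/-- The space has a countable basis consisting of compact open sets. -/
def HasCompactOpenBasis (X : Type*) [TopologicalSpace X] : Prop :=
  ∃ B : Set (Set X), B.Countable ∧ TopologicalSpace.IsTopologicalBasis B ∧
    ∀ U ∈ B, IsCompact U ∧ IsOpen U

/-- The space has no isolated points. -/
def NoIsolatedPoints (X : Type*) [TopologicalSpace X] : Prop :=
  ∀ x : X, ¬ IsOpen ({x} : Set X)

theorem stmt9 {X : Type*} [TopologicalSpace X] [MeasurableSpace X] [BorelSpace X]
    [MetrizableSpace X] [LocallyCompactSpace X] [TotallyDisconnectedSpace X]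
    (hB : HasCompactOpenBasis X) (hni : NoIsolatedPoints X)
    (μ : Measure X) (hfull : IsFull μ) (hna : NonAtomic μ)
    (h0 : μ (DefectiveSet μ) = 0)
    (h : ∀ V : Set X, IsCompactOpen V → μ V ≠ ⊤ → GoodSet μ V) :
    Good μ := by
  intro V hVco U hUco hUV
  obtain ⟨hVc, hVo⟩ := hVco
  by_cases hV : μ V = ⊤
  · -- infinite case
    have hU : μ U ≠ ⊤ := LT.lt.ne (hV ▸ hUV)
    obtain ⟨B, hBcount, hBbasis, hBco⟩ := hB
    -- the family of basis sets contained in V with finite measure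
    set 𝒞 : Set (Set X) := {b | b ∈ B ∧ b ⊆ V ∧ μ b ≠ ⊤} with h𝒞
    have h𝒞count : 𝒞.Countable := hBcount.mono (fun b hb => hb.1)
    have hcover : V \ DefectiveSet μ ⊆ ⋃₀ 𝒞 := by
      rintro x ⟨hxV, hxD⟩
      simp only [DefectiveSet, Set.mem_setOf_eq, not_forall] at hxD
      obtain ⟨Ux, hUxco, hxUx, hUxfin⟩ := hxD
      have hopen : IsOpen (Ux ∩ V) := hUxco.2.inter hVo
      obtain ⟨b, hbB, hxb, hbsub⟩ := hBbasis.exists_subset_of_mem_open (Set.mem_inter hxUx hxV) hopen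
      refine Set.mem_sUnion.2 ⟨b, ⟨hbB, hbsub.trans Set.inter_subset_right, ?_⟩, hxb⟩
      exact fun hh => hUxfin (eq_top_iff.2 (hh ▸ measure_mono (hbsub.trans Set.inter_subset_left)))
    have hSU : μ (⋃₀ 𝒞) = ⊤ := by
      refine eq_top_iff.2 ?_
      calc (⊤ : ℝ≥0∞) = μ V := hV.symm
        _ ≤ μ (V \ DefectiveSet μ) + μ (DefectiveSet μ) := by
            refine le_trans (measure_mono ?_) (measure_union_le _ _)
            intro x hx; by_cases hxd : x ∈ DefectiveSet μ
            · exact Or.inr hxd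
            · exact Or.inl ⟨hx, hxd⟩
        _ = μ (V \ DefectiveSet μ) := by rw [h0, add_zero]
        _ ≤ μ (⋃₀ 𝒞) := measure_mono hcover
    have h𝒞ne : 𝒞.Nonempty := by
      by_contra hne
      rw [Set.not_nonempty_iff_eq_empty] at hne
      rw [hne, Set.sUnion_empty, measure_empty] at hSU
      exact ENNReal.zero_ne_top hSU
    obtain ⟨f, hf⟩ := h𝒞count.exists_eq_range h𝒞ne
    have hfmem : ∀ n, f n ∈ 𝒞 := fun n => hf ▸ Set.mem_range_self n
    have hsU : ⋃₀ 𝒞 = ⋃ n, f n := by rw [hf, Set.sUnion_range]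
    have hiSup : μ (⋃ n, f n) = ⨆ n, μ (Set.accumulate f n) :=
      measure_iUnion_eq_iSup_accumulate
    have htop : (⨆ n, μ (Set.accumulate f n)) = ⊤ := by
      rw [← hiSup, ← hsU]; exact hSU
    -- find n with μ (Accumulate f n) > μ U
    have : μ U < ⨆ n, μ (Set.accumulate f n) := htop ▸ hUV.trans_le (hV ▸ le_refl _)
    obtain ⟨n, hn⟩ := lt_iSup_iff.1 this
    -- Accumulate f n is compact open, ⊆ V, finite measure
    have haccEq : Set.accumulate f n = ⋃ i ∈ Set.Iic n, f i := rfl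
    have hfin : (Set.Iic n).Finite := Set.finite_Iic n
    have hacc_co : IsCompactOpen (Set.accumulate f n) := by
      constructor
      · rw [haccEq]
        exact hfin.isCompact_biUnion (fun i _ => ((hBco _ (hfmem i).1).1))
      · rw [haccEq]
        exact isOpen_biUnion (fun i _ => ((hBco _ (hfmem i).1).2))
    have hacc_sub : Set.accumulate f n ⊆ V := by
      rw [haccEq]; exact Set.iUnion₂_subset fun i _ => (hfmem i).2.1
    have hacc_fin : μ (Set.accumulate f n) ≠ ⊤ := by
      rw [haccEq]
      have := measure_biUnion_lt_top hfin (fun i _ => lt_top_iff_ne_top.2 (hfmem i).2.2)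
      exact this.ne
    obtain ⟨W, hWsub, hWco, hWeq⟩ := h _ hacc_co hacc_fin U hUco hn
    exact ⟨W, hWsub.trans hacc_sub, hWco, hWeq⟩
  · exact h V ⟨hVc, hVo⟩ hV U hUco hUV
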